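/- For the hard-core model on the 2K×3L triangular grid Λ, the communication height between a and b satisfies the lower bound Φ(a,b) − H(a) ≥ min{K, 2L} + 1; equivalently, every path from a to b in X contains a configuration whose energy is at least H(a) + min{K, 2L} + 1. -/

import Mathlib

open Finset
set_option linter.unusedSectionVars false
set_option linter.unusedVariables false

variable (K L : ℕ) [NeZero K] [NeZero L]

/-- Vertices of the `2K × 3L` triangular grid: pairs `(i,j) ∈ (ℤ/2K) × (ℤ/6L)` with `i+j` even. -/
abbrev Vert (K L : ℕ) [NeZero K] [NeZero L] : Type :=
  {p : ZMod (2 * K) × ZMod (6 * L) // (p.1.val + p.2.val) % 2 = 0}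

/-- Adjacency in the triangular grid with periodic boundary conditions. -/
abbrev Adj (v w : Vert K L) : Prop :=
  (w.1.1 = v.1.1 ∧ (w.1.2 = v.1.2 + 2 ∨ w.1.2 = v.1.2 - 2)) ∨
  ((w.1.1 = v.1.1 + 1 ∨ w.1.1 = v.1.1 - 1) ∧ (w.1.2 = v.1.2 + 1 ∨ w.1.2 = v.1.2 - 1))

/-- A particle configuration on the grid. -/
abbrev Cfg (K L : ℕ) [NeZero K] [NeZero L] : Type := Vert K L → Bool

/-- Hard-core condition: no two adjacent occupied sites. -/
abbrev HardCore (σ : Cfg K L) : Prop :=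
  ∀ v w : Vert K L, Adj K L v w → ¬(σ v = true ∧ σ w = true)

/-- Number of particles of a configuration. -/
def nParticles (σ : Cfg K L) : ℕ := (univ.filter fun v => σ v = true).card

/-- The energy (Hamiltonian) `H(σ) = -Σ_v σ(v)`. -/
def energy (σ : Cfg K L) : ℤ := -(nParticles K L σ : ℤ)

/-- The configuration `a`: indicator of `Λ_a` (columns `j ≡ 0 (mod 3)`). -/
def confA : Cfg K L := fun v => decide (v.1.2.val % 3 = 0)

/-- The configuration `b`: indicator of `Λ_b` (columns `j ≡ 1 (mod 3)`). -/
def confB : Cfg K L := fun v => decide (v.1.2.val % 3 = 1)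

/-- The configuration `c`: indicator of `Λ_c` (columns `j ≡ 2 (mod 3)`). -/
def confC : Cfg K L := fun v => decide (v.1.2.val % 3 = 2)

/-- A path in the energy landscape: a finite sequence of hard-core configurations,
consecutive ones differing in at most one vertex. -/
structure HCPath (σ σ' : Cfg K L) where
  n : ℕ
  ω : Fin (n + 1) → Cfg K L
  first : ω 0 = σ
  last : ω (Fin.last n) = σ'
  hc : ∀ i, HardCore K L (ω i)
  step : ∀ i : Fin n,
    ((univ : Finset (Vert K L)).filter fun v => ω i.castSucc v ≠ ω i.succ v).card ≤ 1

/-- Height of a path: maximal energy along it. -/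
noncomputable def pathHeight {σ σ' : Cfg K L} (p : HCPath K L σ σ') : ℤ :=
  Finset.univ.sup' Finset.univ_nonempty fun i => energy K L (p.ω i)

/-- Communication height `Φ(σ,σ')`: minimal height over all paths from `σ` to `σ'`. -/
noncomputable def commHeight (σ σ' : Cfg K L) : ℤ :=
  sInf {h : ℤ | ∃ p : HCPath K L σ σ', pathHeight K L p = h}

/-- The horizontal stripe `S_i = r_{2i} ∪ r_{2i+1}`. -/
abbrev inHStripe (i : ℕ) (v : Vert K L) : Prop :=
  v.1.1 = ((2 * i : ℕ) : ZMod (2 * K)) ∨ v.1.1 = ((2 * i + 1 : ℕ) : ZMod (2 * K))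

/-- The vertical stripe `C_j = c_j ∪ c_{j+1} ∪ c_{j+2}` (column indices mod `6L`). -/
abbrev inVStripe (j : ℕ) (v : Vert K L) : Prop :=
  v.1.2 = ((j : ℕ) : ZMod (6 * L)) ∨ v.1.2 = ((j + 1 : ℕ) : ZMod (6 * L)) ∨
    v.1.2 = ((j + 2 : ℕ) : ZMod (6 * L))

/-- Two configurations agree on a region. -/
def agreesOn (P : Vert K L → Prop) (σ τ : Cfg K L) : Prop := ∀ v, P v → σ v = τ v

namespace TriAux

variable {K L}

instance : NeZero (2 * K) := ⟨by have := NeZero.ne K; positivity⟩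
instance : NeZero (6 * L) := ⟨by have := NeZero.ne L; positivity⟩

lemma val_cast_mod_two (a : ℕ) : (((a : ℕ) : ZMod (6 * L)).val) % 2 = a % 2 := by
  rw [ZMod.val_natCast]
  exact Nat.mod_mod_of_dvd a ⟨3 * L, by ring⟩

lemma val_cast_mod_three (a : ℕ) : (((a : ℕ) : ZMod (6 * L)).val) % 3 = a % 3 := by
  rw [ZMod.val_natCast]
  exact Nat.mod_mod_of_dvd a ⟨2 * L, by ring⟩

lemma self_cast_val (j : ZMod (6 * L)) : ((j.val : ℕ) : ZMod (6 * L)) = j := by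
  rw [ZMod.natCast_val, ZMod.cast_id]

lemma add_cast_eq (j : ZMod (6 * L)) (a : ℕ) : j + (a : ZMod (6 * L)) = ((j.val + a : ℕ) : ZMod (6 * L)) := by
  push_cast [self_cast_val]; ring

lemma val_add_one_mod_two (j : ZMod (6 * L)) : (j + 1).val % 2 = (j.val + 1) % 2 := by
  conv_lhs => rw [show j + 1 = ((j.val + 1 : ℕ) : ZMod (6 * L)) by
    have := add_cast_eq j 1; push_cast at this ⊢; exact this]
  exact val_cast_mod_two _

lemma val_add_one_mod_three (j : ZMod (6 * L)) : (j + 1).val % 3 = (j.val + 1) % 3 := by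
  conv_lhs => rw [show j + 1 = ((j.val + 1 : ℕ) : ZMod (6 * L)) by
    have := add_cast_eq j 1; push_cast at this ⊢; exact this]
  exact val_cast_mod_three _

def rowOf (j : ZMod (6 * L)) (x : ZMod K) : ZMod (2 * K) :=
  ((2 * x.val + j.val % 2 : ℕ) : ZMod (2 * K))

lemma rowOf_val (j : ZMod (6 * L)) (x : ZMod K) :
    (rowOf j x).val = 2 * x.val + j.val % 2 := by
  have hx := ZMod.val_lt x
  have : 2 * x.val + j.val % 2 < 2 * K := by omega
  exact ZMod.val_cast_of_lt this

lemma iota_mem (j : ZMod (6 * L)) (x : ZMod K) :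
    ((rowOf j x).val + j.val) % 2 = 0 := by
  rw [rowOf_val]; omega

def iota (j : ZMod (6 * L)) (x : ZMod K) : Vert K L :=
  ⟨(rowOf j x, j), iota_mem j x⟩

lemma iota_inj : ∀ j x j' x', (iota (K := K) (L := L) j x = iota j' x') → j = j' ∧ x = x' := by
  intro j x j' x' h
  have h2 : j = j' := congrArg (fun v => v.1.2) h
  subst h2
  have h1 : rowOf j x = rowOf j x' := congrArg (fun v => v.1.1) h
  have := congrArg ZMod.val h1
  rw [rowOf_val, rowOf_val] at this
  have hxx : x.val = x'.val := by omega
  exact ⟨rfl, ZMod.val_injective _ hxx⟩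

lemma iota_surj (v : Vert K L) : ∃ j x, iota j x = v := by
  obtain ⟨⟨i, j⟩, hv⟩ := v
  refine ⟨j, ((i.val / 2 : ℕ) : ZMod K), ?_⟩
  have hi := ZMod.val_lt i
  have hx : (((i.val / 2 : ℕ) : ZMod K)).val = i.val / 2 :=
    ZMod.val_cast_of_lt (by omega)
  have hrow : rowOf j ((i.val / 2 : ℕ) : ZMod K) = i := by
    have hpar : j.val % 2 = i.val % 2 := by simp at hv; omega
    have : (2 * (i.val / 2) + j.val % 2 : ℕ) = i.val := by omega
    rw [rowOf, hx, this, ZMod.natCast_val, ZMod.cast_id]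
  simp only [iota, Subtype.mk.injEq, Prod.mk.injEq]
  exact ⟨hrow, trivial⟩

/-! ### row relations -/

lemma rowOf_parity_eq (j j' : ZMod (6 * L)) (x : ZMod K) (h : j.val % 2 = j'.val % 2) :
    rowOf j x = rowOf j' x := by rw [rowOf, rowOf, h]

lemma cast_two_mul_succ (x : ZMod K) :
    ((2 * (x + 1).val : ℕ) : ZMod (2 * K)) = ((2 * x.val + 2 : ℕ) : ZMod (2 * K)) := by
  rw [ZMod.natCast_eq_natCast_iff]
  have h1 : (x + 1).val ≡ x.val + 1 [MOD K] := by
    have : ((x + 1).val : ZMod K) = (((x.val + 1 : ℕ)) : ZMod K) := by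
      push_cast [ZMod.natCast_val, ZMod.cast_id]; ring
    exact (ZMod.natCast_eq_natCast_iff _ _ _).1 this
  have := Nat.ModEq.mul_left' (c := 2) h1
  simpa [Nat.mul_add] using this

lemma rowOf_succ_even (j : ZMod (6 * L)) (x : ZMod K) (h : j.val % 2 = 0) :
    rowOf (j + 1) x = rowOf j x + 1 := by
  have hpar : (j + 1).val % 2 = 1 := by rw [val_add_one_mod_two]; omega
  rw [rowOf, rowOf, hpar, h]
  push_cast; ring

lemma rowOf_up (j j' : ZMod (6 * L)) (x : ZMod K) (hj : j.val % 2 = 1) (hj' : j'.val % 2 = 0) :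
    rowOf j' (x + 1) = rowOf j x + 1 := by
  rw [rowOf, rowOf, hj, hj']
  rw [show (2 * (x+1).val + 0 : ℕ) = 2 * (x+1).val by omega, cast_two_mul_succ]
  push_cast; ring


/-! ### occupancy and hard-core relations -/

def occ (σ : Cfg K L) (j : ZMod (6 * L)) (x : ZMod K) : Prop := σ (iota j x) = true

variable {σ : Cfg K L}

lemma H1 (hσ : HardCore K L σ) {j : ZMod (6 * L)} {x : ZMod K}
    (h : occ σ j x) (h' : occ σ (j + 1) x) : False := by
  rcases Nat.even_or_odd j.val with he | ho
  · have hp : j.val % 2 = 0 := Nat.even_iff.1 he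
    refine hσ (iota j x) (iota (j+1) x) ?_ ⟨h, h'⟩
    exact Or.inr ⟨Or.inl (rowOf_succ_even j x hp), Or.inl rfl⟩
  · have hp : j.val % 2 = 1 := Nat.odd_iff.1 ho
    have hp' : (j + 1).val % 2 = 0 := by rw [val_add_one_mod_two]; omega
    refine hσ (iota j x) (iota (j+1) x) ?_ ⟨h, h'⟩
    refine Or.inr ⟨Or.inr ?_, Or.inl rfl⟩
    show rowOf (j+1) x = rowOf j x - 1
    simp only [rowOf, hp, hp']
    rw [eq_sub_iff_add_eq]
    push_cast; ring

lemma H2 (hσ : HardCore K L σ) {j : ZMod (6 * L)} {x : ZMod K}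
    (h : occ σ j x) (h' : occ σ (j + 2) x) : False := by
  have hpar : (j + 2).val % 2 = j.val % 2 := by
    have : j + 2 = ((j.val + 2 : ℕ) : ZMod (6 * L)) := by
      have := add_cast_eq j 2; push_cast at this ⊢; exact this
    rw [this, val_cast_mod_two]; omega
  refine hσ (iota j x) (iota (j+2) x) ?_ ⟨h, h'⟩
  exact Or.inl ⟨rowOf_parity_eq _ _ x hpar, Or.inl rfl⟩

lemma H3a (hσ : HardCore K L σ) {j : ZMod (6 * L)} {x : ZMod K} (hj : j.val % 2 = 1)
    (h : occ σ j x) (h' : occ σ (j + 1) (x + 1)) : False := by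
  have hp' : (j + 1).val % 2 = 0 := by rw [val_add_one_mod_two]; omega
  refine hσ (iota j x) (iota (j+1) (x+1)) ?_ ⟨h, h'⟩
  exact Or.inr ⟨Or.inl (rowOf_up j (j+1) x hj hp'), Or.inl rfl⟩

lemma H3b (hσ : HardCore K L σ) {j : ZMod (6 * L)} {x : ZMod K} (hj : j.val % 2 = 1)
    (h : occ σ j x) (h' : occ σ (j - 1) (x + 1)) : False := by
  have hp' : (j - 1).val % 2 = 0 := by
    have h2 : (j - 1) + 1 = j := by ring
    have := val_add_one_mod_two (j - 1)
    rw [h2] at this; omega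
  refine hσ (iota j x) (iota (j-1) (x+1)) ?_ ⟨h, h'⟩
  exact Or.inr ⟨Or.inl (rowOf_up j (j-1) x hj hp'), Or.inr rfl⟩


instance : NeZero (2 * L) := ⟨by have := NeZero.ne L; positivity⟩

/-! ### columns of triples -/

def col (s : ℕ) (t : ZMod (2 * L)) (k : ℕ) : ZMod (6 * L) :=
  ((3 * t.val + s + k : ℕ) : ZMod (6 * L))

lemma col_succ (s : ℕ) (t : ZMod (2 * L)) (k : ℕ) :
    col s t (k + 1) = col s t k + 1 := by
  simp only [col]; push_cast; ring

lemma col_class (s : ℕ) (t : ZMod (2 * L)) (k : ℕ) :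
    (col s t k).val % 3 = (s + k) % 3 := by
  rw [col, val_cast_mod_three]; omega

lemma col_parity (s : ℕ) (t : ZMod (2 * L)) (k : ℕ) :
    (col s t k).val % 2 = (3 * t.val + s + k) % 2 := by
  rw [col, val_cast_mod_two]

lemma col_injective (s : ℕ) : Function.Injective
    (fun p : ZMod (2 * L) × Fin 3 => col s p.1 p.2.val) := by
  rintro ⟨t, k⟩ ⟨t', k'⟩ h
  simp only [col] at h
  have hmod : 3 * t.val + s + k.val ≡ 3 * t'.val + s + k'.val [MOD 6 * L] :=
    (ZMod.natCast_eq_natCast_iff _ _ _).1 h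
  have hmod' : (3 * t.val + k.val) + s ≡ (3 * t'.val + k'.val) + s [MOD 6 * L] := by
    simpa [Nat.add_assoc, Nat.add_comm, Nat.add_left_comm] using hmod
  have h2 : 3 * t.val + k.val ≡ 3 * t'.val + k'.val [MOD 6 * L] :=
    Nat.ModEq.add_right_cancel' s hmod'
  have ht := ZMod.val_lt t; have ht' := ZMod.val_lt t'
  have hk := k.isLt; have hk' := k'.isLt
  have heq : 3 * t.val + k.val = 3 * t'.val + k'.val := by
    have h3 : (3 * t.val + k.val) % (6 * L) = (3 * t'.val + k'.val) % (6 * L) := h2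
    rw [Nat.mod_eq_of_lt (by omega), Nat.mod_eq_of_lt (by omega)] at h3
    exact h3
  have : t.val = t'.val ∧ k.val = k'.val := by omega
  exact Prod.ext (ZMod.val_injective _ this.1) (Fin.ext this.2)

lemma col_bijective (s : ℕ) : Function.Bijective
    (fun p : ZMod (2 * L) × Fin 3 => col s p.1 p.2.val) := by
  rw [Fintype.bijective_iff_injective_and_card]
  refine ⟨col_injective s, ?_⟩
  simp [ZMod.card]; ring

/-- the equivalence between triple positions and columns -/
noncomputable def colEquiv (s : ℕ) : (ZMod (2 * L) × Fin 3) ≃ ZMod (6 * L) :=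
  Equiv.ofBijective _ (col_bijective s)

/-! ### counts -/

def ind (σ : Cfg K L) (j : ZMod (6 * L)) (x : ZMod K) : ℕ :=
  if σ (iota j x) = true then 1 else 0

def cnt (σ : Cfg K L) (x : ZMod K) : ℕ := ∑ j : ZMod (6 * L), ind σ j x

def tcnt (s : ℕ) (σ : Cfg K L) (x : ZMod K) (t : ZMod (2 * L)) : ℕ :=
  ∑ k : Fin 3, ind σ (col s t k.val) x

def N (σ : Cfg K L) : ℕ := ∑ x : ZMod K, cnt σ x

lemma cnt_eq_sum_tcnt (s : ℕ) (σ : Cfg K L) (x : ZMod K) :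
    cnt σ x = ∑ t : ZMod (2 * L), tcnt s σ x t := by
  rw [cnt, ← Equiv.sum_comp (colEquiv s) (fun j => ind σ j x), Fintype.sum_prod_type]
  rfl

lemma N_eq_sum_vcnt (s : ℕ) (σ : Cfg K L) :
    N σ = ∑ t : ZMod (2 * L), ∑ x : ZMod K, tcnt s σ x t := by
  rw [N]
  have : ∀ x : ZMod K, cnt σ x = ∑ t : ZMod (2 * L), tcnt s σ x t := cnt_eq_sum_tcnt s σ
  rw [Finset.sum_congr rfl (fun x _ => this x)]
  rw [Finset.sum_comm]

noncomputable def vertEquiv : (ZMod (6 * L) × ZMod K) ≃ Vert K L :=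
  Equiv.ofBijective (fun p => iota p.1 p.2)
    ⟨fun p q h => by
      obtain ⟨h1, h2⟩ := iota_inj p.1 p.2 q.1 q.2 h
      exact Prod.ext h1 h2,
     fun v => by obtain ⟨j, x, h⟩ := iota_surj v; exact ⟨(j, x), h⟩⟩

lemma iota_bijective : Function.Bijective (fun p : ZMod (6 * L) × ZMod K => iota p.1 p.2) :=
  ⟨fun p q h => by
      obtain ⟨h1, h2⟩ := iota_inj p.1 p.2 q.1 q.2 h
      exact Prod.ext h1 h2,
   fun v => by obtain ⟨j, x, h⟩ := iota_surj v; exact ⟨(j, x), h⟩⟩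

lemma nParticles_eq_N (σ : Cfg K L) : nParticles K L σ = N σ := by
  rw [nParticles, Finset.card_filter]
  have hb := Fintype.sum_bijective _ (iota_bijective (K := K) (L := L))
    (fun p : ZMod (6 * L) × ZMod K => ind σ p.1 p.2)
    (fun v => if σ v = true then 1 else 0) (fun p => rfl)
  rw [← hb, Fintype.sum_prod_type, Finset.sum_comm]
  rfl

lemma ind_le_one (σ : Cfg K L) (j : ZMod (6 * L)) (x : ZMod K) : ind σ j x ≤ 1 := by
  rw [ind]; split <;> omega

lemma ind_eq_one_iff {σ : Cfg K L} {j : ZMod (6 * L)} {x : ZMod K} :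
    ind σ j x = 1 ↔ occ σ j x := by
  rw [ind, occ]; split <;> simp_all

lemma tcnt_le_one {σ : Cfg K L} (hσ : HardCore K L σ) (s : ℕ) (x : ZMod K) (t : ZMod (2 * L)) :
    tcnt s σ x t ≤ 1 := by
  have e01 : col s t 1 = col s t 0 + 1 := col_succ s t 0
  have e12 : col s t 2 = col s t 1 + 1 := col_succ s t 1
  have e02 : col s t 2 = col s t 0 + 2 := by rw [e12, e01]; ring
  have h01 : ¬(occ σ (col s t 0) x ∧ occ σ (col s t 1) x) := by
    rintro ⟨h, h'⟩; exact H1 hσ h (e01 ▸ h')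
  have h12 : ¬(occ σ (col s t 1) x ∧ occ σ (col s t 2) x) := by
    rintro ⟨h, h'⟩; exact H1 hσ h (e12 ▸ h')
  have h02 : ¬(occ σ (col s t 0) x ∧ occ σ (col s t 2) x) := by
    rintro ⟨h, h'⟩; exact H2 hσ h (e02 ▸ h')
  rw [tcnt, Fin.sum_univ_three]
  simp only [Fin.val_zero, Fin.val_one, Fin.val_two]
  have b0 := ind_le_one σ (col s t 0) x
  have b1 := ind_le_one σ (col s t 1) x
  have b2 := ind_le_one σ (col s t 2) x
  by_contra hc
  have h2 : (ind σ (col s t 0) x = 1 ∧ ind σ (col s t 1) x = 1) ∨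
      (ind σ (col s t 1) x = 1 ∧ ind σ (col s t 2) x = 1) ∨
      (ind σ (col s t 0) x = 1 ∧ ind σ (col s t 2) x = 1) := by omega
  rcases h2 with ⟨u, v⟩ | ⟨u, v⟩ | ⟨u, v⟩
  · exact h01 ⟨ind_eq_one_iff.1 u, ind_eq_one_iff.1 v⟩
  · exact h12 ⟨ind_eq_one_iff.1 u, ind_eq_one_iff.1 v⟩
  · exact h02 ⟨ind_eq_one_iff.1 u, ind_eq_one_iff.1 v⟩

lemma sum_one_zmod (n : ℕ) [NeZero n] : (∑ _t : ZMod n, (1 : ℕ)) = n := by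
  simp [Finset.card_univ, ZMod.card]

lemma sum_one_zmodK : (∑ _x : ZMod K, (1 : ℕ)) = K := sum_one_zmod K

lemma cnt_le {σ : Cfg K L} (hσ : HardCore K L σ) (x : ZMod K) : cnt σ x ≤ 2 * L := by
  rw [cnt_eq_sum_tcnt 0]
  calc ∑ t : ZMod (2 * L), tcnt 0 σ x t ≤ ∑ _t : ZMod (2 * L), 1 :=
        Finset.sum_le_sum (fun t _ => tcnt_le_one hσ 0 x t)
    _ = 2 * L := sum_one_zmod _

lemma noFull_bound {σ : Cfg K L} (hσ : HardCore K L σ)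
    (h : ∀ x, cnt σ x ≠ 2 * L) : N σ ≤ K * (2 * L - 1) := by
  rw [N]
  calc ∑ x : ZMod K, cnt σ x ≤ ∑ _x : ZMod K, (2 * L - 1) := by
        refine Finset.sum_le_sum (fun x _ => ?_)
        have := cnt_le hσ x; have := h x; omega
    _ = K * (2 * L - 1) := by
        rw [Finset.sum_const, Finset.card_univ, ZMod.card, smul_eq_mul]

lemma full_tcnt_one {σ : Cfg K L} (hσ : HardCore K L σ) {x : ZMod K}
    (hfull : cnt σ x = 2 * L) (t : ZMod (2 * L)) : tcnt 0 σ x t = 1 := by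
  by_contra hne
  have h0 : tcnt 0 σ x t = 0 := by have := tcnt_le_one hσ 0 x t; omega
  have hlt : ∑ u : ZMod (2 * L), tcnt 0 σ x u < ∑ _u : ZMod (2 * L), 1 := by
    refine Finset.sum_lt_sum (fun u _ => tcnt_le_one hσ 0 x u) ⟨t, Finset.mem_univ t, by omega⟩
  rw [← cnt_eq_sum_tcnt 0, sum_one_zmod, hfull] at hlt
  omega

lemma tcnt_pos_exists {σ : Cfg K L} {s : ℕ} {x : ZMod K} {t : ZMod (2 * L)}
    (h : 1 ≤ tcnt s σ x t) : ∃ k : Fin 3, occ σ (col s t k.val) x := by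
  by_contra hc
  push_neg at hc
  have : tcnt s σ x t = 0 := by
    rw [tcnt]
    refine Finset.sum_eq_zero (fun k _ => ?_)
    have := hc k
    rw [ind]; rw [occ] at this; simp [this]
  omega

lemma triple_unique {σ : Cfg K L} (hσ : HardCore K L σ) {s : ℕ} {x : ZMod K}
    {t : ZMod (2 * L)} {k k' : Fin 3}
    (h : occ σ (col s t k.val) x) (h' : occ σ (col s t k'.val) x) : k = k' := by
  have e01 : col s t 1 = col s t 0 + 1 := col_succ s t 0
  have e12 : col s t 2 = col s t 1 + 1 := col_succ s t 1
  have e02 : col s t 2 = col s t 0 + 2 := by rw [e12, e01]; ring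
  fin_cases k <;> fin_cases k' <;> simp only [Fin.val_zero, Fin.val_one, Fin.val_two] at h h' ⊢
  · exact False.elim (H1 hσ h (e01 ▸ h'))
  · exact False.elim (H2 hσ h (e02 ▸ h'))
  · exact False.elim (H1 hσ h' (e01 ▸ h))
  · exact False.elim (H1 hσ h (e12 ▸ h'))
  · exact False.elim (H2 hσ h' (e02 ▸ h))
  · exact False.elim (H1 hσ h' (e12 ▸ h))

lemma cast3_succ (t : ZMod (2 * L)) :
    ((3 * (t + 1).val : ℕ) : ZMod (6 * L)) = ((3 * t.val + 3 : ℕ) : ZMod (6 * L)) := by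
  rw [ZMod.natCast_eq_natCast_iff]
  have h1 : (t + 1).val ≡ t.val + 1 [MOD 2 * L] := by
    have : ((t + 1).val : ZMod (2 * L)) = ((t.val + 1 : ℕ) : ZMod (2 * L)) := by
      push_cast [ZMod.natCast_val, ZMod.cast_id]; ring
    exact (ZMod.natCast_eq_natCast_iff _ _ _).1 this
  have h2 := Nat.ModEq.mul_left' (c := 3) h1
  have : (3 : ℕ) * (2 * L) = 6 * L := by ring
  rw [this] at h2
  simpa [Nat.mul_add] using h2

lemma col_next (s : ℕ) (t : ZMod (2 * L)) (k k' : Fin 3) :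
    col s (t + 1) k'.val = col s t k.val + ((3 + k'.val - k.val : ℕ) : ZMod (6 * L)) := by
  have hk := k.isLt
  rw [col, col, add_cast_eq, ZMod.natCast_eq_natCast_iff]
  have hval : (((3 * t.val + s + k.val : ℕ) : ZMod (6 * L))).val = (3 * t.val + s + k.val) % (6 * L) :=
    ZMod.val_natCast _ _
  rw [hval]
  have h1 : 3 * (t + 1).val ≡ 3 * t.val + 3 [MOD 6 * L] :=
    (ZMod.natCast_eq_natCast_iff _ _ _).1 (cast3_succ t)
  have h2 : (3 * t.val + s + k.val) % (6 * L) ≡ 3 * t.val + s + k.val [MOD 6 * L] :=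
    Nat.mod_modEq _ _
  have e : (3 * t.val + s + k.val) + (3 + k'.val - k.val) = (3 * t.val + 3) + s + k'.val := by
    omega
  calc 3 * (t + 1).val + s + k'.val
      ≡ (3 * t.val + 3) + s + k'.val [MOD 6 * L] :=
        Nat.ModEq.add_right _ (Nat.ModEq.add_right _ h1)
    _ = (3 * t.val + s + k.val) + (3 + k'.val - k.val) := e.symm
    _ ≡ (3 * t.val + s + k.val) % (6 * L) + (3 + k'.val - k.val) [MOD 6 * L] :=
        Nat.ModEq.add_right _ h2.symm

lemma full_pure {σ : Cfg K L} (hσ : HardCore K L σ) {x : ZMod K}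
    (hfull : cnt σ x = 2 * L) :
    ∃ r < 3, ∀ j : ZMod (6 * L), occ σ j x ↔ j.val % 3 = r := by
  have htc := full_tcnt_one hσ hfull
  have hex : ∀ t : ZMod (2 * L), ∃ k : Fin 3, occ σ (col 0 t k.val) x :=
    fun t => tcnt_pos_exists (by rw [htc t])
  choose o ho using hex
  -- monotone step
  have hstep : ∀ t : ZMod (2 * L), (o t).val ≤ (o (t + 1)).val := by
    intro t
    by_contra hlt
    push_neg at hlt
    have hrel := col_next 0 t (o t) (o (t + 1))
    have hd : 3 + (o (t + 1)).val - (o t).val = 1 ∨ 3 + (o (t + 1)).val - (o t).val = 2 := by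
      have := (o t).isLt; have := (o (t + 1)).isLt; omega
    rcases hd with hd | hd
    · rw [hd] at hrel
      exact H1 hσ (ho t) (by rw [← Nat.cast_one (R := ZMod (6 * L)), ← hrel]; exact ho (t + 1))
    · rw [hd] at hrel
      exact H2 hσ (ho t) (by
        have : ((2 : ℕ) : ZMod (6 * L)) = 2 := by push_cast; rfl
        rw [← this, ← hrel]; exact ho (t + 1))
  -- constancy around the cycle
  have hsum : ∑ t : ZMod (2 * L), (o (t + 1)).val = ∑ t : ZMod (2 * L), (o t).val :=
    Fintype.sum_equiv (Equiv.addRight (1 : ZMod (2 * L))) _ _ (fun t => rfl)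
  have heqp : ∀ t : ZMod (2 * L), (o t).val = (o (t + 1)).val := by
    have := (Finset.sum_eq_sum_iff_of_le
      (s := Finset.univ) (f := fun t : ZMod (2 * L) => (o t).val)
      (g := fun t : ZMod (2 * L) => (o (t + 1)).val) (fun t _ => hstep t)).1 hsum.symm
    exact fun t => this t (Finset.mem_univ t)
  have hconst : ∀ t : ZMod (2 * L), o t = o 0 := by
    have hnat : ∀ n : ℕ, o ((n : ZMod (2 * L))) = o 0 := by
      intro n
      induction n with
      | zero => simp
      | succ m ih =>
        have : ((m + 1 : ℕ) : ZMod (2 * L)) = ((m : ℕ) : ZMod (2 * L)) + 1 := by push_cast; ring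
        rw [this, ← ih]
        exact (Fin.ext (heqp _)).symm
    intro t
    have : ((t.val : ℕ) : ZMod (2 * L)) = t := by rw [ZMod.natCast_val, ZMod.cast_id]
    rw [← this]; exact hnat t.val
  refine ⟨(o 0).val, (o 0).isLt, fun j => ⟨fun hj => ?_, fun hj => ?_⟩⟩
  · obtain ⟨⟨t, k⟩, hp⟩ := (col_bijective (L := L) 0).2 j
    simp only at hp
    have hk : k = o t := triple_unique hσ (hp ▸ hj) (ho t)
    have : j.val % 3 = k.val := by
      rw [← hp, col_class]; have := k.isLt; omega
    rw [this, hk, hconst t]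
  · obtain ⟨⟨t, k⟩, hp⟩ := (col_bijective (L := L) 0).2 j
    simp only at hp
    have hcl : j.val % 3 = k.val := by
      rw [← hp, col_class]; have := k.isLt; omega
    have hk : k = o t := by
      have h1 : k.val = (o 0).val := by omega
      rw [hconst t]; exact Fin.ext h1
    rw [← hp, hk]
    exact ho t

/-! ### The propagation lemma -/

lemma self_cast_valK (x : ZMod K) : ((x.val : ℕ) : ZMod K) = x := by
  rw [ZMod.natCast_val, ZMod.cast_id]

lemma vstripe_has_empty {σ : Cfg K L} (hσ : HardCore K L σ) {p q : ZMod K} (hpq : p ≠ q)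
    {r s : ℕ} (hsr : (s + 1) % 3 = r) (hr0 : r ≠ 0) (hr3 : r < 3)
    (hq : ∀ j : ZMod (6 * L), occ σ j q ↔ j.val % 3 = r)
    (hp : ∀ j : ZMod (6 * L), occ σ j p → j.val % 3 = 0)
    (t : ZMod (2 * L)) :
    ∃ x0 : ZMod K, tcnt s σ x0 t = 0 := by
  by_contra hc
  push_neg at hc
  have hne : ∀ x : ZMod K, ∃ k : Fin 3, occ σ (col s t k.val) x := by
    intro x
    exact tcnt_pos_exists (by have := hc x; omega)
  set j0 := col s t 0 with hj0
  set j1 := col s t 1 with hj1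
  set j2 := col s t 2 with hj2
  have e01 : j1 = j0 + 1 := col_succ s t 0
  have e12 : j2 = j1 + 1 := col_succ s t 1
  have hj1class : j1.val % 3 = r := by rw [hj1, col_class]; omega
  have hq1 : occ σ j1 q := (hq j1).2 hj1class
  have hp1 : ¬ occ σ j1 p := fun h => by have := hp j1 h; omega
  have hpar0 : j0.val % 2 = (3 * t.val + s) % 2 := by rw [hj0, col_parity]; omega
  have hpar1 : j1.val % 2 = (3 * t.val + s + 1) % 2 := by rw [hj1, col_parity]
  have hpar2 : j2.val % 2 = (3 * t.val + s + 2) % 2 := by rw [hj2, col_parity]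
  rcases Nat.even_or_odd (3 * t.val + s) with hcpar | hcpar
  · -- even base column: upward propagation of the middle
    have hce : (3 * t.val + s) % 2 = 0 := Nat.even_iff.1 hcpar
    have hodd1 : j1.val % 2 = 1 := by omega
    have chain : ∀ nk : ℕ, occ σ j1 (q + (nk : ZMod K)) := by
      intro nk
      induction nk with
      | zero => simpa using hq1
      | succ m ih =>
        have hxs : q + ((m + 1 : ℕ) : ZMod K) = (q + (m : ℕ)) + 1 := by push_cast; ring
        rw [hxs]
        obtain ⟨k, hk⟩ := hne ((q + (m : ℕ)) + 1)
        have hA : ¬ occ σ j2 ((q + (m : ℕ)) + 1) := by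
          intro h2
          exact H3a hσ hodd1 ih (by rw [← e12]; exact h2)
        have hB : ¬ occ σ j0 ((q + (m : ℕ)) + 1) := by
          intro h0
          have hj0e : j0 = j1 - 1 := by rw [e01]; ring
          exact H3b hσ hodd1 ih (by rw [← hj0e]; exact h0)
        fin_cases k <;> simp only [Fin.val_zero, Fin.val_one, Fin.val_two] at hk
        · exact absurd hk hB
        · exact hk
        · exact absurd hk hA
    have hfin : occ σ j1 p := by
      have := chain (p - q).val
      rwa [self_cast_valK, add_sub_cancel] at this
    exact hp1 hfin
  · -- odd base column: downward propagation of the middle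
    have hco : (3 * t.val + s) % 2 = 1 := Nat.odd_iff.1 hcpar
    have hodd0 : j0.val % 2 = 1 := by omega
    have hodd2 : j2.val % 2 = 1 := by omega
    have chain : ∀ nk : ℕ, occ σ j1 (q - (nk : ZMod K)) := by
      intro nk
      induction nk with
      | zero => simpa using hq1
      | succ m ih =>
        have hxs : (q - ((m + 1 : ℕ) : ZMod K)) + 1 = q - (m : ℕ) := by push_cast; ring
        obtain ⟨k, hk⟩ := hne (q - ((m + 1 : ℕ) : ZMod K))
        fin_cases k <;> simp only [Fin.val_zero, Fin.val_one, Fin.val_two] at hk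
        · exfalso
          refine H3a hσ hodd0 hk ?_
          rw [hxs, ← e01]
          exact ih
        · exact hk
        · exfalso
          refine H3b hσ hodd2 hk ?_
          rw [hxs]
          have : j1 = j2 - 1 := by rw [e12]; ring
          rw [← this]
          exact ih
    have hfin : occ σ j1 p := by
      have := chain (q - p).val
      rwa [self_cast_valK, sub_sub_cancel] at this
    exact hp1 hfin

lemma prop_bound {σ : Cfg K L} (hσ : HardCore K L σ) {p q : ZMod K} (hpq : p ≠ q)
    {r : ℕ} (hr3 : r < 3) (hr0 : r ≠ 0)
    (hq : ∀ j : ZMod (6 * L), occ σ j q ↔ j.val % 3 = r)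
    (hp : ∀ j : ZMod (6 * L), occ σ j p → j.val % 3 = 0) :
    N σ ≤ 2 * L * (K - 1) := by
  have hK1 : 1 ≤ K := Nat.pos_of_ne_zero (NeZero.ne K)
  set s : ℕ := if r = 1 then 0 else 1 with hs
  have hsr : (s + 1) % 3 = r := by
    rcases Nat.eq_or_lt_of_le (Nat.one_le_iff_ne_zero.2 hr0) with h | h
    · simp [hs, ← h]
    · have : r = 2 := by omega
      simp [hs, this]
  have hvs := vstripe_has_empty hσ hpq hsr hr0 hr3 hq hp
  rw [N_eq_sum_vcnt s]
  calc ∑ t : ZMod (2 * L), ∑ x : ZMod K, tcnt s σ x t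
      ≤ ∑ _t : ZMod (2 * L), (K - 1) := by
        refine Finset.sum_le_sum (fun t _ => ?_)
        obtain ⟨x0, hx0⟩ := hvs t
        have hlt : ∑ x : ZMod K, tcnt s σ x t < ∑ _x : ZMod K, 1 := by
          refine Finset.sum_lt_sum (fun x _ => tcnt_le_one hσ s x t)
            ⟨x0, Finset.mem_univ x0, by omega⟩
        rw [sum_one_zmodK] at hlt
        omega
    _ = 2 * L * (K - 1) := by
        rw [Finset.sum_const, Finset.card_univ, ZMod.card, smul_eq_mul]

/-! ### single-site changes -/

lemma cnt_pos_exists {σ : Cfg K L} {x : ZMod K} (h : 1 ≤ cnt σ x) :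
    ∃ j : ZMod (6 * L), occ σ j x := by
  by_contra hc
  push_neg at hc
  have : cnt σ x = 0 := by
    rw [cnt]
    refine Finset.sum_eq_zero (fun j _ => ?_)
    have := hc j
    rw [ind]; rw [occ] at this; simp [this]
  omega

lemma step_cases (σ σ' : Cfg K L)
    (h : ((univ : Finset (Vert K L)).filter fun v => σ v ≠ σ' v).card ≤ 1) :
    σ = σ' ∨ ∃ v : Vert K L, σ v ≠ σ' v ∧ ∀ w : Vert K L, w ≠ v → σ w = σ' w := by
  by_cases hall : ∀ v : Vert K L, σ v = σ' v
  · exact Or.inl (funext hall)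
  · push_neg at hall
    obtain ⟨v, hv⟩ := hall
    refine Or.inr ⟨v, hv, fun w hw => ?_⟩
    by_contra hww
    have hmem : v ∈ (univ : Finset (Vert K L)).filter fun v => σ v ≠ σ' v := by
      simp [hv]
    have hmem' : w ∈ (univ : Finset (Vert K L)).filter fun v => σ v ≠ σ' v := by
      simp [hww]
    exact hw (Finset.card_le_one.1 h w hmem' v hmem)

section PointChange

variable {σ σ' : Cfg K L} {jv : ZMod (6 * L)} {xv : ZMod K}

/-- occupancies agree away from the changed vertex -/
lemma occ_eq_of_ne (hagree : ∀ w : Vert K L, w ≠ iota jv xv → σ w = σ' w)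
    {j : ZMod (6 * L)} {x : ZMod K} (hne : ¬(j = jv ∧ x = xv)) :
    occ σ j x ↔ occ σ' j x := by
  have : iota j x ≠ iota jv xv := by
    intro h
    obtain ⟨h1, h2⟩ := iota_inj _ _ _ _ h
    exact hne ⟨h1, h2⟩
  rw [occ, occ, hagree _ this]

lemma cnt_eq_of_ne_stripe (hagree : ∀ w : Vert K L, w ≠ iota jv xv → σ w = σ' w)
    {x : ZMod K} (hx : x ≠ xv) : cnt σ x = cnt σ' x := by
  rw [cnt, cnt]
  refine Finset.sum_congr rfl (fun j _ => ?_)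
  have : iota j x ≠ iota jv xv := by
    intro h; exact hx (iota_inj _ _ _ _ h).2
  rw [ind, ind, hagree _ this]

/-- counting for adding a particle at `(jv, xv)` -/
lemma cnt_add (hagree : ∀ w : Vert K L, w ≠ iota jv xv → σ w = σ' w)
    (hfrom : σ (iota jv xv) = false) (hto : σ' (iota jv xv) = true) :
    cnt σ' xv = cnt σ xv + 1 := by
  rw [cnt, cnt]
  have hpt : ∀ j : ZMod (6 * L), ind σ' j xv = ind σ j xv + (if j = jv then 1 else 0) := by
    intro j
    by_cases hj : j = jv
    · subst hj
      rw [ind, ind, hfrom, hto]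
      simp
    · have : iota j xv ≠ iota jv xv := by
        intro h; exact hj (iota_inj _ _ _ _ h).1
      rw [ind, ind, hagree _ this]
      simp [hj]
  rw [Finset.sum_congr rfl (fun j _ => hpt j), Finset.sum_add_distrib]
  congr 1
  simp

lemma N_add (hagree : ∀ w : Vert K L, w ≠ iota jv xv → σ w = σ' w)
    (hfrom : σ (iota jv xv) = false) (hto : σ' (iota jv xv) = true) :
    N σ' = N σ + 1 := by
  rw [N, N]
  have hpt : ∀ x : ZMod K, cnt σ' x = cnt σ x + (if x = xv then 1 else 0) := by
    intro x
    by_cases hx : x = xv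
    · subst hx; rw [cnt_add hagree hfrom hto]; simp
    · rw [← cnt_eq_of_ne_stripe hagree hx]; simp [hx]
  rw [Finset.sum_congr rfl (fun x _ => hpt x), Finset.sum_add_distrib]
  congr 1
  simp

end PointChange

/-! ### the invariant -/

variable (K L) in
def Inv (σ : Cfg K L) : Prop :=
  (∀ x : ZMod K, cnt σ x = 2 * L → ∀ j : ZMod (6 * L), occ σ j x → j.val % 3 = 0) ∧
  (∃ x : ZMod K, (∀ j : ZMod (6 * L), occ σ j x → j.val % 3 = 0) ∧ 2 * L - 1 ≤ cnt σ x)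

lemma prod_eq1 (hK : 1 ≤ K) : 2 * L * (K - 1) + 2 * L = 2 * K * L := by
  have h1 : K - 1 + 1 = K := by omega
  calc 2 * L * (K - 1) + 2 * L = 2 * L * ((K - 1) + 1) := by ring
    _ = 2 * K * L := by rw [h1]; ring

lemma prod_eq2 (hL : 1 ≤ L) : K * (2 * L - 1) + K = 2 * K * L := by
  have h1 : 2 * L - 1 + 1 = 2 * L := by omega
  calc K * (2 * L - 1) + K = K * ((2 * L - 1) + 1) := by ring
    _ = 2 * K * L := by rw [h1]; ring

lemma Inv_step (hK : 2 ≤ K) (hL : 1 ≤ L) {σ σ' : Cfg K L}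
    (hσ : HardCore K L σ) (hσ' : HardCore K L σ')
    (hcard : ((univ : Finset (Vert K L)).filter fun v => σ v ≠ σ' v).card ≤ 1)
    (hbσ : 2 * K * L ≤ N σ + min K (2 * L))
    (hbσ' : 2 * K * L ≤ N σ' + min K (2 * L))
    (hInv : Inv K L σ) : Inv K L σ' := by
  have hmK : min K (2 * L) ≤ K := Nat.min_le_left _ _
  have hm2L : min K (2 * L) ≤ 2 * L := Nat.min_le_right _ _
  have hp1 := prod_eq1 (K := K) (L := L) (by omega)
  have hp2 := prod_eq2 (K := K) (L := L) hL
  rcases step_cases σ σ' hcard with heq | ⟨v, hv, hagree⟩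
  · rwa [← heq]
  obtain ⟨jv, xv, hiv⟩ := iota_surj v
  subst hiv
  by_cases hb : σ (iota jv xv) = true
  · -- REMOVE case
    have hto : σ' (iota jv xv) = false := by
      cases h' : σ' (iota jv xv)
      · rfl
      · exact absurd (hb.trans h'.symm) hv
    have hagree' : ∀ w : Vert K L, w ≠ iota jv xv → σ' w = σ w := fun w hw => (hagree w hw).symm
    have hcntv : cnt σ xv = cnt σ' xv + 1 := cnt_add hagree' hto hb
    have hNv : N σ = N σ' + 1 := N_add hagree' hto hb
    constructor
    · -- full stripes of σ' are pure of class 0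
      intro x hfull j hj
      by_cases hx : x = xv
      · exfalso
        rw [hx] at hfull
        have := cnt_le hσ xv
        omega
      · have hcs : cnt σ x = 2 * L := by rw [cnt_eq_of_ne_stripe hagree hx]; exact hfull
        have hjσ : occ σ j x := (occ_eq_of_ne hagree (fun hc => hx hc.2)).2 hj
        exact hInv.1 x hcs j hjσ
    · -- witness survives
      obtain ⟨pw, hpw_pure, hpw_cnt⟩ := hInv.2
      by_cases hpv : pw = xv
      · subst hpv
        by_cases hfw : cnt σ pw = 2 * L
        · -- witness was full: still a witness
          refine ⟨pw, fun j hj => ?_, by omega⟩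
          have hjjv : j ≠ jv := by
            intro h
            rw [h, occ, hto] at hj
            simp at hj
          exact hpw_pure j ((occ_eq_of_ne hagree (fun hc => hjjv hc.1)).2 hj)
        · -- witness had 2L-1 particles: find a full stripe of σ
          have hlow : cnt σ pw = 2 * L - 1 := by
            have := cnt_le hσ pw; omega
          have hfull : ∃ F : ZMod K, cnt σ F = 2 * L := by
            by_contra hc
            push_neg at hc
            have := noFull_bound hσ hc
            omega
          obtain ⟨F, hF⟩ := hfull
          have hFne : F ≠ pw := fun h => by rw [h, hlow] at hF; omega
          refine ⟨F, fun j hj => ?_, ?_⟩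
          · exact hInv.1 F hF j ((occ_eq_of_ne hagree (fun hc => hFne hc.2)).2 hj)
          · rw [← cnt_eq_of_ne_stripe hagree hFne, hF]; omega
      · refine ⟨pw, fun j hj => hpw_pure j ((occ_eq_of_ne hagree (fun hc => hpv hc.2)).2 hj), ?_⟩
        rw [← cnt_eq_of_ne_stripe hagree hpv]
        exact hpw_cnt
  · -- ADD case
    have hfrom : σ (iota jv xv) = false := by
      cases h' : σ (iota jv xv)
      · rfl
      · exact absurd h' hb
    have hto : σ' (iota jv xv) = true := by
      cases h' : σ' (iota jv xv)
      · exfalso; exact hv (hfrom.trans h'.symm)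
      · rfl
    have hcntv : cnt σ' xv = cnt σ xv + 1 := cnt_add hagree hfrom hto
    have hNv : N σ' = N σ + 1 := N_add hagree hfrom hto
    obtain ⟨pw, hpw_pure, hpw_cnt⟩ := hInv.2
    constructor
    · -- full stripes of σ' are pure of class 0
      intro x hfull j hj
      by_cases hx : x = xv
      · subst hx
        obtain ⟨r, hr3, hfp⟩ := full_pure hσ' hfull
        have hr0 : r = 0 := by
          by_contra hr0
          by_cases hpv : pw = x
          · subst hpv
            obtain ⟨j₀, hj₀⟩ := cnt_pos_exists (σ := σ) (x := pw) (by omega)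
            have hj₀jv : j₀ ≠ jv := by
              intro h
              rw [h, occ, hfrom] at hj₀
              simp at hj₀
            have hocc' : occ σ' j₀ pw := (occ_eq_of_ne hagree (fun hc => hj₀jv hc.1)).1 hj₀
            have h0 : j₀.val % 3 = 0 := hpw_pure j₀ hj₀
            have hr : j₀.val % 3 = r := (hfp j₀).1 hocc'
            omega
          · have hp' : ∀ j : ZMod (6 * L), occ σ' j pw → j.val % 3 = 0 :=
              fun j hj' => hpw_pure j ((occ_eq_of_ne hagree (fun hc => hpv hc.2)).2 hj')
            have hNle := prop_bound hσ' hpv (by omega : r < 3) hr0 hfp hp'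
            omega
        have := (hfp j).1 hj
        omega
      · have hcs : cnt σ x = 2 * L := by rw [cnt_eq_of_ne_stripe hagree hx]; exact hfull
        have hjσ : occ σ j x := (occ_eq_of_ne hagree (fun hc => hx hc.2)).2 hj
        exact hInv.1 x hcs j hjσ
    · -- witness survives
      by_cases hpv : pw = xv
      · subst hpv
        by_cases hcl : jv.val % 3 = 0
        · refine ⟨pw, fun j hj => ?_, by omega⟩
          by_cases hjjv : j = jv
          · rw [hjjv]; exact hcl
          · exact hpw_pure j ((occ_eq_of_ne hagree (fun hc => hjjv hc.1)).2 hj)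
        · -- adding a non-aligned particle to the witness stripe is impossible
          exfalso
          have hfull : cnt σ' pw = 2 * L := by
            have := cnt_le hσ' pw; omega
          obtain ⟨r, hr3, hfp⟩ := full_pure hσ' hfull
          have hrjv : jv.val % 3 = r := (hfp jv).1 (by rw [occ]; exact hto)
          obtain ⟨j₀, hj₀⟩ := cnt_pos_exists (σ := σ) (x := pw) (by omega)
          have hj₀jv : j₀ ≠ jv := by
            intro h
            rw [h, occ, hfrom] at hj₀
            simp at hj₀
          have hocc' : occ σ' j₀ pw := (occ_eq_of_ne hagree (fun hc => hj₀jv hc.1)).1 hj₀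
          have h0 : j₀.val % 3 = 0 := hpw_pure j₀ hj₀
          have hr : j₀.val % 3 = r := (hfp j₀).1 hocc'
          omega
      · refine ⟨pw, fun j hj => hpw_pure j ((occ_eq_of_ne hagree (fun hc => hpv hc.2)).2 hj), ?_⟩
        rw [← cnt_eq_of_ne_stripe hagree hpv]
        exact hpw_cnt

/-! ### invariant at the endpoints -/

lemma occ_confA (j : ZMod (6 * L)) (x : ZMod K) :
    occ (confA K L) j x ↔ j.val % 3 = 0 := by
  rw [occ, confA]
  simp [iota]
  exact ⟨of_decide_eq_true, decide_eq_true⟩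

lemma occ_confB (j : ZMod (6 * L)) (x : ZMod K) :
    occ (confB K L) j x ↔ j.val % 3 = 1 := by
  rw [occ, confB]
  simp [iota]
  exact ⟨of_decide_eq_true, decide_eq_true⟩

lemma ind_eq_zero_of_not {σ : Cfg K L} {j : ZMod (6 * L)} {x : ZMod K}
    (h : ¬ occ σ j x) : ind σ j x = 0 := by
  rw [ind]; rw [occ] at h; simp [h]

lemma cnt_confA (x : ZMod K) : cnt (confA K L) x = 2 * L := by
  rw [cnt_eq_sum_tcnt 0]
  have ht : ∀ t : ZMod (2 * L), tcnt 0 (confA K L) x t = 1 := by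
    intro t
    have h0 : occ (confA K L) (col 0 t 0) x := by
      rw [occ_confA, col_class]
    have h1 : ¬ occ (confA K L) (col 0 t 1) x := by
      rw [occ_confA, col_class]; omega
    have h2 : ¬ occ (confA K L) (col 0 t 2) x := by
      rw [occ_confA, col_class]; omega
    rw [tcnt, Fin.sum_univ_three]
    simp only [Fin.val_zero, Fin.val_one, Fin.val_two]
    rw [ind_eq_one_iff.2 h0, ind_eq_zero_of_not h1, ind_eq_zero_of_not h2]
  rw [Finset.sum_congr rfl (fun t _ => ht t), sum_one_zmod]

lemma N_confA : N (confA K L) = 2 * K * L := by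
  rw [N, Finset.sum_congr rfl (fun x _ => cnt_confA x), Finset.sum_const,
    Finset.card_univ, ZMod.card, smul_eq_mul]
  ring

lemma Inv_confA : Inv K L (confA K L) := by
  constructor
  · intro x _ j hj
    exact (occ_confA j x).1 hj
  · exact ⟨0, fun j hj => (occ_confA j 0).1 hj, by rw [cnt_confA]; omega⟩

lemma not_Inv_confB (hL : 1 ≤ L) : ¬ Inv K L (confB K L) := by
  rintro ⟨_, x, hpure, hcnt⟩
  obtain ⟨j, hj⟩ := cnt_pos_exists (σ := confB K L) (x := x) (by omega)
  have h1 := (occ_confB j x).1 hj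
  have h0 := hpure j hj
  omega

lemma energy_eq (σ : Cfg K L) : energy K L σ = -(N σ : ℤ) := by
  rw [energy, nParticles_eq_N]

/-! ### main statements -/

lemma part2 (hK : 2 ≤ K) (hL : 1 ≤ L) (p : HCPath K L (confA K L) (confB K L)) :
    energy K L (confA K L) + (((min K (2 * L) : ℕ) : ℤ) + 1) ≤ pathHeight K L p := by
  by_contra hcon
  push_neg at hcon
  rw [pathHeight] at hcon
  rw [Finset.sup'_lt_iff] at hcon
  have hbud : ∀ i : Fin (p.n + 1), 2 * K * L ≤ N (p.ω i) + min K (2 * L) := by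
    intro i
    have h1 := hcon i (Finset.mem_univ i)
    rw [energy_eq, energy_eq, N_confA] at h1
    have hm2L : min K (2 * L) ≤ 2 * L := Nat.min_le_right _ _
    omega
  have hInvAll : ∀ i : Fin (p.n + 1), Inv K L (p.ω i) := by
    intro i
    induction i using Fin.induction with
    | zero => rw [p.first]; exact Inv_confA
    | succ i ih =>
      exact Inv_step hK hL (p.hc i.castSucc) (p.hc i.succ) (p.step i)
        (hbud i.castSucc) (hbud i.succ) ih
  have := hInvAll (Fin.last p.n)
  rw [p.last] at this
  exact not_Inv_confB hL this

lemma part1 (hK : 2 ≤ K) (hL : 1 ≤ L) :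
    commHeight K L (confA K L) (confB K L) - energy K L (confA K L)
      ≥ ((min K (2 * L) : ℕ) : ℤ) + 1 := by
  rw [commHeight]
  set S : Set ℤ := {h : ℤ | ∃ p : HCPath K L (confA K L) (confB K L), pathHeight K L p = h}
    with hS
  by_cases hne : S.Nonempty
  · have hlb : ∀ h ∈ S, energy K L (confA K L) + (((min K (2 * L) : ℕ) : ℤ) + 1) ≤ h := by
      rintro h ⟨p, rfl⟩
      exact part2 hK hL p
    have := le_csInf hne hlb
    omega
  · rw [Set.not_nonempty_iff_eq_empty] at hne
    rw [hne, Int.csInf_empty]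
    rw [energy_eq, N_confA]
    have hm2L : min K (2 * L) ≤ 2 * L := Nat.min_le_right _ _
    have hKL : 2 * 2 * L ≤ 2 * K * L := by
      have := Nat.mul_le_mul_right L (Nat.mul_le_mul_left 2 hK)
      simpa using this
    omega

end TriAux

/-- Lower bound on the communication height between `a` and `b`:
`Φ(a,b) − H(a) ≥ min{K, 2L} + 1`; equivalently, every path from `a` to `b` reaches
energy at least `H(a) + min{K, 2L} + 1`. -/
theorem comm_height_lower_bound (hK : 2 ≤ K) (hL : 1 ≤ L) :
    commHeight K L (confA K L) (confB K L) - energy K L (confA K L)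
        ≥ ((min K (2 * L) : ℕ) : ℤ) + 1 ∧
    ∀ p : HCPath K L (confA K L) (confB K L),
      energy K L (confA K L) + (((min K (2 * L) : ℕ) : ℤ) + 1) ≤ pathHeight K L p := by
  exact ⟨TriAux.part1 hK hL, fun p => TriAux.part2 hK hL p⟩
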